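/- Let 0<a<π/2, α,β∈ℝ, m∈ℤ, and let ψ:[-a,a]→ℂ be twice continuously differentiable with ψ′(a)+(iα+β)ψ(a)=0 and ψ′(−a)+(iα−β)ψ(−a)=0. Define h[ψ] := ∫_{−a}^{a} conj(ψ(x))·( −ψ″(x) + tan(x)·ψ′(x) + (m²/cos²x)·ψ(x) )·cos(x) dx. Then Re h[ψ] = ∫_{−a}^{a}|ψ′(x)|²·cos(x) dx + ∫_{−a}^{a}(m²/cos²x)·|ψ(x)|²·cos(x) dx + β·cos(a)·(|ψ(a)|²+|ψ(−a)|²), and Im h[ψ] = α·cos(a)·(|ψ(a)|²−|ψ(−a)|²). -/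

import Mathlib

/-- real and imaginary parts of the quadratic form
`h[ψ] = (ψ, H_{I(+1)}^m ψ)` of the positive-curvature transverse Hamiltonian
in the weighted space `L²((-a,a), cos x dx)`. -/
theorem pt_positive_curvature_numerical_range
    (a α β : ℝ) (ha0 : 0 < a) (ha : a < Real.pi / 2) (m : ℤ)
    (ψ ψ' ψ'' : ℝ → ℂ)
    (hd1 : ∀ x ∈ Set.Icc (-a) a, HasDerivAt ψ (ψ' x) x)
    (hd2 : ∀ x ∈ Set.Icc (-a) a, HasDerivAt ψ' (ψ'' x) x)
    (hcont : ContinuousOn ψ'' (Set.Icc (-a) a))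
    (hbc1 : ψ' a + (Complex.I * (α : ℂ) + (β : ℂ)) * ψ a = 0)
    (hbc2 : ψ' (-a) + (Complex.I * (α : ℂ) - (β : ℂ)) * ψ (-a) = 0)
    (h : ℂ)
    (hh : h = ∫ x in (-a)..a,
      (starRingEnd ℂ) (ψ x) *
        (-ψ'' x + (Real.tan x : ℂ) * ψ' x
          + (((m : ℝ) ^ 2 / Real.cos x ^ 2 : ℝ) : ℂ) * ψ x) * (Real.cos x : ℂ)) :
    h.re = (∫ x in (-a)..a, ‖ψ' x‖ ^ 2 * Real.cos x)
        + (∫ x in (-a)..a, ((m : ℝ) ^ 2 / Real.cos x ^ 2) * ‖ψ x‖ ^ 2 * Real.cos x)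
        + β * Real.cos a * (‖ψ a‖ ^ 2 + ‖ψ (-a)‖ ^ 2) ∧
    h.im = α * Real.cos a * (‖ψ a‖ ^ 2 - ‖ψ (-a)‖ ^ 2) := by
  have hle : -a ≤ a := by linarith
  have huIcc : Set.uIcc (-a) a = Set.Icc (-a) a := Set.uIcc_of_le hle
  have hcos : ∀ x ∈ Set.Icc (-a) a, Real.cos x ≠ 0 := by
    intro x hx
    exact (Real.cos_pos_of_mem_Ioo ⟨by linarith [hx.1], by linarith [hx.2]⟩).ne'
  -- continuity
  have hψc : ContinuousOn ψ (Set.Icc (-a) a) :=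
    fun x hx => ((hd1 x hx).continuousAt).continuousWithinAt
  have hψ'c : ContinuousOn ψ' (Set.Icc (-a) a) :=
    fun x hx => ((hd2 x hx).continuousAt).continuousWithinAt
  -- v and its derivative
  set v : ℝ → ℂ := fun x => ψ' x * (Real.cos x : ℂ) with hv
  set vd : ℝ → ℂ := fun x => ψ'' x * (Real.cos x : ℂ) - ψ' x * (Real.sin x : ℂ) with hvd
  have hvder : ∀ x ∈ Set.Icc (-a) a, HasDerivAt v (vd x) x := by
    intro x hx
    have h1 : HasDerivAt (fun y : ℝ => ((Real.cos y : ℝ) : ℂ)) ((-Real.sin x : ℝ) : ℂ) x :=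
      (Real.hasDerivAt_cos x).ofReal_comp
    have := (hd2 x hx).mul h1
    exact this.congr_deriv (by simp only [hvd]; rw [Complex.ofReal_neg]; ring)
  -- integrability pieces
  have hvdInt : IntervalIntegrable vd MeasureTheory.volume (-a) a := by
    apply ContinuousOn.intervalIntegrable
    rw [huIcc]
    exact (hcont.mul (Complex.continuous_ofReal.comp Real.continuous_cos).continuousOn).sub
      (hψ'c.mul (Complex.continuous_ofReal.comp Real.continuous_sin).continuousOn)
  have hstarInt : IntervalIntegrable (fun x => (starRingEnd ℂ) (ψ' x))
      MeasureTheory.volume (-a) a := by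
    apply ContinuousOn.intervalIntegrable
    rw [huIcc]
    exact Complex.continuous_conj.comp_continuousOn hψ'c
  -- integration by parts
  have hibp := intervalIntegral.integral_mul_deriv_eq_deriv_mul
    (u := fun x => (starRingEnd ℂ) (ψ x)) (u' := fun x => (starRingEnd ℂ) (ψ' x))
    (v := v) (v' := vd)
    (fun x hx => by simpa using (hd1 x (huIcc ▸ hx)).star)
    (fun x hx => hvder x (huIcc ▸ hx)) hstarInt hvdInt
  -- rewrite h's integrand as a sum
  have hsplit : h = (∫ x in (-a)..a, -((starRingEnd ℂ) (ψ x) * vd x))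
      + ∫ x in (-a)..a, ((((m:ℝ)^2 / Real.cos x ^ 2) * ‖ψ x‖^2 * Real.cos x : ℝ) : ℂ) := by
    rw [hh, ← intervalIntegral.integral_add]
    · apply intervalIntegral.integral_congr
      intro x hx
      rw [huIcc] at hx
      have hcx := hcos x hx
      have htan : (Real.tan x : ℂ) * (Real.cos x : ℂ) = (Real.sin x : ℂ) := by
        rw [← Complex.ofReal_mul]
        congr 1
        rw [Real.tan_eq_sin_div_cos, div_mul_cancel₀ _ hcx]
      have hconj : (starRingEnd ℂ) (ψ x) * ψ x = ((‖ψ x‖^2 : ℝ) : ℂ) := by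
        rw [mul_comm, Complex.mul_conj]
        norm_cast
        rw [Complex.normSq_eq_norm_sq]
      simp only [hvd]
      rw [Complex.ofReal_mul, Complex.ofReal_mul, ← hconj,
        show ((Real.sin x : ℝ) : ℂ) = (Real.tan x : ℂ) * (Real.cos x : ℂ) from htan.symm]
      ring
    · apply IntervalIntegrable.neg
      apply ContinuousOn.intervalIntegrable
      rw [huIcc]
      exact (Complex.continuous_conj.comp_continuousOn hψc).mul
        ((hcont.mul (Complex.continuous_ofReal.comp Real.continuous_cos).continuousOn).sub
          (hψ'c.mul (Complex.continuous_ofReal.comp Real.continuous_sin).continuousOn))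
    · apply ContinuousOn.intervalIntegrable
      rw [huIcc]
      apply Continuous.comp_continuousOn Complex.continuous_ofReal
      apply ContinuousOn.mul
      apply ContinuousOn.mul
      · exact continuousOn_const.div (Real.continuous_cos.continuousOn.pow 2)
          (fun x hx => pow_ne_zero 2 (hcos x hx))
      · exact (hψc.norm).pow 2
      · exact Real.continuous_cos.continuousOn
  -- the kinetic integral
  have hkin : (∫ x in (-a)..a, (starRingEnd ℂ) (ψ' x) * v x)
      = ((∫ x in (-a)..a, ‖ψ' x‖^2 * Real.cos x : ℝ) : ℂ) := by
    rw [← intervalIntegral.integral_ofReal]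
    apply intervalIntegral.integral_congr
    intro x hx
    simp only [hv]
    push_cast
    rw [← mul_assoc, mul_comm ((starRingEnd ℂ) (ψ' x)), Complex.mul_conj]
    norm_cast
    rw [Complex.normSq_eq_norm_sq]
  -- boundary values
  have hba : ψ' a = -(Complex.I * (α : ℂ) + (β : ℂ)) * ψ a := by
    have := hbc1; linear_combination this
  have hbb : ψ' (-a) = -(Complex.I * (α : ℂ) - (β : ℂ)) * ψ (-a) := by
    linear_combination hbc2
  have hna : (starRingEnd ℂ) (ψ a) * ψ a = ((‖ψ a‖^2 : ℝ) : ℂ) := by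
    rw [mul_comm, Complex.mul_conj]; norm_cast
    rw [Complex.normSq_eq_norm_sq]
  have hnb : (starRingEnd ℂ) (ψ (-a)) * ψ (-a) = ((‖ψ (-a)‖^2 : ℝ) : ℂ) := by
    rw [mul_comm, Complex.mul_conj]; norm_cast
    rw [Complex.normSq_eq_norm_sq]
  -- assemble
  have hC : h = ((∫ x in (-a)..a, ‖ψ' x‖^2 * Real.cos x : ℝ) : ℂ)
      + ((∫ x in (-a)..a, ((m:ℝ)^2 / Real.cos x ^ 2) * ‖ψ x‖^2 * Real.cos x : ℝ) : ℂ)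
      + ((Complex.I * (α:ℂ) + (β:ℂ)) * ((‖ψ a‖^2 : ℝ):ℂ) * ((Real.cos a : ℝ):ℂ)
        - (Complex.I * (α:ℂ) - (β:ℂ)) * ((‖ψ (-a)‖^2 : ℝ):ℂ) * ((Real.cos a : ℝ):ℂ)) := by
    rw [hsplit, intervalIntegral.integral_neg, hibp, hkin, intervalIntegral.integral_ofReal]
    simp only [hv]
    rw [hba, hbb]
    rw [show ((starRingEnd ℂ) (ψ a) * (-(Complex.I * (α : ℂ) + (β : ℂ)) * ψ a * (Real.cos a : ℂ)))
        = -(Complex.I * (α : ℂ) + (β : ℂ)) * ((starRingEnd ℂ) (ψ a) * ψ a) * (Real.cos a : ℂ) by ring,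
      show ((starRingEnd ℂ) (ψ (-a)) * (-(Complex.I * (α : ℂ) - (β : ℂ)) * ψ (-a) * (Real.cos (-a) : ℂ)))
        = -(Complex.I * (α : ℂ) - (β : ℂ)) * ((starRingEnd ℂ) (ψ (-a)) * ψ (-a)) * (Real.cos (-a) : ℂ) by ring,
      hna, hnb, Real.cos_neg]
    ring
  constructor
  · rw [hC]
    simp only [Complex.add_re, Complex.sub_re, Complex.mul_re, Complex.mul_im,
      Complex.ofReal_re, Complex.ofReal_im, Complex.I_re, Complex.I_im,
      Complex.add_im, Complex.sub_im]
    ring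
  · rw [hC]
    simp only [Complex.add_im, Complex.sub_im, Complex.mul_im, Complex.mul_re,
      Complex.ofReal_re, Complex.ofReal_im, Complex.I_re, Complex.I_im,
      Complex.add_re, Complex.sub_re]
    ring
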